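/- Let $n,r,t$ be positive integers with $r,t\ge2$ and $n\ge tr$. Let $G$ be an $r$-graph on $[n]$ with no $t$ pairwise disjoint edges, left-compressed relative to the natural order. Then the link $L_G(n)=\{f\in\binom{[n-1]}{r-1}: f\cup\{n\}\in G\}$ contains no $t$ pairwise disjoint $(r-1)$-sets. Moreover, if $r=3$ and some edge of $G$ contains both $n-1$ and $n$, then the induced subgraph $G[\{2,\dots,n\}]$ contains no $t-1$ pairwise disjoint edges. -/

import Mathlib

open Finset

lemma exists_inj_map {α β : Type*} [DecidableEq α] [DecidableEq β] [Inhabited β]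
    (s : Finset α) (t : Finset β) (h : s.card ≤ t.card) :
    ∃ f : α → β, Set.InjOn f s ∧ ∀ a ∈ s, f a ∈ t := by
  obtain ⟨t', hsub, hcard⟩ := Finset.exists_subset_card_eq h
  have e : s ≃ t' := Finset.equivOfCardEq hcard.symm
  refine ⟨fun a => if h : a ∈ s then (e ⟨a, h⟩ : β) else default, ?_, ?_⟩
  · intro a ha b hb hab
    simp only [Set.mem_setOf_eq, Finset.mem_coe] at ha hb
    simp only [dif_pos ha, dif_pos hb] at hab
    have := e.injective (Subtype.ext hab)
    exact congrArg Subtype.val this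
  · intro a ha
    simp only [dif_pos ha]
    exact hsub (e ⟨a, ha⟩).2

section Part1

variable (n r t : ℕ)

lemma part1 (hr : 2 ≤ r) (ht : 2 ≤ t) (hn : t*r ≤ n)
    (G : Finset (Finset ℕ)) (hG : ∀ e ∈ G, e ⊆ Finset.Icc 1 n ∧ e.card = r)
    (hc : ∀ i j, 1 ≤ i → i < j → j ≤ n → ∀ e ∈ G, j ∈ e → i ∉ e →
      insert i (e.erase j) ∈ G)
    (M : Finset (Finset ℕ))
    (hMsub : M ⊆ (G.filter fun e => n ∈ e).image fun e => e.erase n)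
    (hMcard : M.card = t)
    (hMdisj : (M : Set (Finset ℕ)).Pairwise fun e f => Disjoint e f) :
    ∃ M' : Finset (Finset ℕ), M' ⊆ G ∧ M'.card = t ∧
      (M' : Set (Finset ℕ)).Pairwise fun e f => Disjoint e f := by
  have hn4 : 4 ≤ n := le_trans (Nat.mul_le_mul ht hr) hn
  have hprop : ∀ f ∈ M, insert n f ∈ G ∧ n ∉ f ∧ f.card = r - 1 ∧
      f ⊆ Finset.Icc 1 (n-1) := by
    intro f hf
    have := hMsub hf
    simp only [Finset.mem_image, Finset.mem_filter] at this
    obtain ⟨e, ⟨heG, hne⟩, hfe⟩ := this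
    subst hfe
    have hnf : n ∉ e.erase n := Finset.notMem_erase _ _
    have hins : insert n (e.erase n) = e := Finset.insert_erase hne
    refine ⟨by rw [hins]; exact heG, hnf, ?_, ?_⟩
    · rw [Finset.card_erase_of_mem hne, (hG e heG).2]
    · intro x hx
      have hx' : x ∈ e := Finset.mem_of_mem_erase hx
      have := (hG e heG).1 hx'
      rw [Finset.mem_Icc] at this ⊢
      have hxn : x ≠ n := Finset.ne_of_mem_erase hx
      omega
  set U : Finset ℕ := M.biUnion id with hU
  have hUcard : U.card = t * (r-1) := by
    have h1 : (M.biUnion id).card = ∑ u ∈ M, (id u).card :=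
      Finset.card_biUnion (fun x hx y hy hxy =>
        hMdisj (Finset.mem_coe.mpr hx) (Finset.mem_coe.mpr hy) hxy)
    rw [hU, h1]
    simp only [id_eq]
    rw [Finset.sum_congr rfl fun f hf => (hprop f hf).2.2.1, Finset.sum_const,
      hMcard, smul_eq_mul]
  have hUmem : ∀ {x}, x ∈ U ↔ ∃ f ∈ M, x ∈ f := by
    intro x; simp [hU]
  set F : Finset ℕ := Finset.Icc 1 (n-1) \ U with hF
  have hFcard : t - 1 ≤ F.card := by
    have h1 : (Finset.Icc 1 (n-1)).card - U.card ≤ F.card := by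
      rw [hF]; exact Finset.le_card_sdiff U _
    rw [Nat.card_Icc] at h1
    have hmul : t * (r-1) + t = t * r := by
      have h2 : r - 1 + 1 = r := by omega
      calc t * (r-1) + t = t * (r-1+1) := by ring
        _ = t * r := by rw [h2]
    omega
  obtain ⟨f0, hf0⟩ := Finset.card_pos.mp (by omega : 0 < M.card)
  have hφex : (M.erase f0).card ≤ F.card := by
    rw [Finset.card_erase_of_mem hf0, hMcard]; exact hFcard
  obtain ⟨φ, hφinj, hφmem⟩ := exists_inj_map (M.erase f0) F hφex
  have hφF : ∀ f ∈ M, f ≠ f0 → φ f ∈ F := fun f hf hne =>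
    hφmem f (Finset.mem_erase.mpr ⟨hne, hf⟩)
  have hφfacts : ∀ f ∈ M, f ≠ f0 → 1 ≤ φ f ∧ φ f ≤ n - 1 ∧ ∀ g ∈ M, φ f ∉ g := by
    intro f hf hne
    have := hφF f hf hne
    rw [hF, Finset.mem_sdiff, Finset.mem_Icc] at this
    exact ⟨this.1.1, this.1.2, fun g hg hmem => this.2 (hUmem.mpr ⟨g, hg, hmem⟩)⟩
  set ψ : Finset ℕ → Finset ℕ :=
    fun f => if f = f0 then insert n f0 else insert (φ f) f with hψ
  have hψ0 : ψ f0 = insert n f0 := if_pos rfl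
  have hψ1 : ∀ f, f ≠ f0 → ψ f = insert (φ f) f := fun f h => if_neg h
  have hψG : ∀ f ∈ M, ψ f ∈ G := by
    intro f hf
    by_cases hne : f = f0
    · rw [hne, hψ0]; exact (hprop f0 hf0).1
    · rw [hψ1 f hne]
      obtain ⟨h1, h2, h3⟩ := hφfacts f hf hne
      have hnot : φ f ∉ insert n f := by
        simp only [Finset.mem_insert, not_or]
        exact ⟨by omega, h3 f hf⟩
      have := hc (φ f) n h1 (by omega) le_rfl (insert n f) (hprop f hf).1
        (Finset.mem_insert_self n f) hnot
      rwa [Finset.erase_insert (hprop f hf).2.1] at this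
  have hdisj : ∀ f ∈ M, ∀ g ∈ M, f ≠ g → Disjoint (ψ f) (ψ g) := by
    intro f hf g hg hfg
    have hfg' : Disjoint f g :=
      hMdisj (Finset.mem_coe.mpr hf) (Finset.mem_coe.mpr hg) hfg
    rw [Finset.disjoint_left] at hfg' ⊢
    intro a ha hb
    by_cases hf0' : f = f0 <;> by_cases hg0' : g = f0
    · exact hfg (hf0'.trans hg0'.symm)
    · rw [hf0', hψ0] at ha
      rw [hψ1 g hg0'] at hb
      obtain ⟨h1, h2, h3⟩ := hφfacts g hg hg0'
      rcases Finset.mem_insert.mp ha with h | h <;>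
        rcases Finset.mem_insert.mp hb with h' | h'
      · omega
      · subst h; exact (hprop g hg).2.1 h'
      · subst h'; exact h3 f0 hf0 (hf0' ▸ h)
      · exact hfg' (hf0' ▸ h) h'
    · rw [hψ1 f hf0'] at ha
      rw [hg0', hψ0] at hb
      obtain ⟨h1, h2, h3⟩ := hφfacts f hf hf0'
      rcases Finset.mem_insert.mp ha with h | h <;>
        rcases Finset.mem_insert.mp hb with h' | h'
      · omega
      · subst h; exact h3 f0 hf0 (hg0' ▸ h')
      · subst h'; exact (hprop f hf).2.1 h
      · exact hfg' h (hg0' ▸ h')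
    · rw [hψ1 f hf0'] at ha
      rw [hψ1 g hg0'] at hb
      obtain ⟨h1, h2, h3⟩ := hφfacts f hf hf0'
      obtain ⟨h1', h2', h3'⟩ := hφfacts g hg hg0'
      rcases Finset.mem_insert.mp ha with h | h <;>
        rcases Finset.mem_insert.mp hb with h' | h'
      · have : φ f = φ g := h ▸ h'
        exact hfg (hφinj (Finset.mem_coe.mpr (Finset.mem_erase.mpr ⟨hf0', hf⟩))
          (Finset.mem_coe.mpr (Finset.mem_erase.mpr ⟨hg0', hg⟩)) this)
      · subst h; exact h3 g hg h'
      · subst h'; exact h3' f hf h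
      · exact hfg' h h'
  have hψinj : Set.InjOn ψ M := by
    intro a ha b hb hab
    by_contra hne
    have hd := hdisj a (Finset.mem_coe.mp ha) b (Finset.mem_coe.mp hb) hne
    rw [hab, disjoint_self, Finset.bot_eq_empty] at hd
    have hnonempty : (ψ b).Nonempty := by
      by_cases h : b = f0
      · rw [h, hψ0]; exact Finset.insert_nonempty _ _
      · rw [hψ1 b h]; exact Finset.insert_nonempty _ _
    obtain ⟨x, hx⟩ := hnonempty
    rw [hd] at hx
    exact absurd hx (Finset.notMem_empty x)
  refine ⟨M.image ψ, ?_, ?_, ?_⟩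
  · rw [Finset.image_subset_iff]; exact hψG
  · rw [Finset.card_image_of_injOn hψinj, hMcard]
  · intro x hx y hy hxy
    simp only [Finset.coe_image, Set.mem_image, Finset.mem_coe] at hx hy
    obtain ⟨f, hf, rfl⟩ := hx
    obtain ⟨g, hg, rfl⟩ := hy
    exact hdisj f hf g hg (fun h => hxy (h ▸ rfl))

end Part1

lemma part2 (n t : ℕ) (ht : 2 ≤ t) (hn : t*3 ≤ n)
    (G : Finset (Finset ℕ)) (hG : ∀ e ∈ G, e ⊆ Finset.Icc 1 n ∧ e.card = 3)
    (hc : ∀ i j, 1 ≤ i → i < j → j ≤ n → ∀ e ∈ G, j ∈ e → i ∉ e →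
      insert i (e.erase j) ∈ G)
    (e0 : Finset ℕ) (he0 : e0 ∈ G) (hn1e0 : n-1 ∈ e0) (hne0 : n ∈ e0)
    (M : Finset (Finset ℕ))
    (hMsub : M ⊆ G.filter fun e => 1 ∉ e)
    (hMcard : M.card = t - 1)
    (hMdisj : (M : Set (Finset ℕ)).Pairwise fun e f => Disjoint e f) :
    ∃ M' : Finset (Finset ℕ), M' ⊆ G ∧ M'.card = t ∧
      (M' : Set (Finset ℕ)).Pairwise fun e f => Disjoint e f := by
  have hn6 : 6 ≤ n := le_trans (Nat.mul_le_mul_right 3 ht) hn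
  have hMprop : ∀ f ∈ M, f ∈ G ∧ 1 ∉ f := by
    intro f hf
    have := Finset.mem_filter.mp (hMsub hf)
    exact ⟨this.1, this.2⟩
  set U : Finset ℕ := M.biUnion id with hU
  have hUmem : ∀ {x}, x ∈ U ↔ ∃ f ∈ M, x ∈ f := by intro x; simp [hU]
  have hUcard : U.card = (t-1) * 3 := by
    have h1 : (M.biUnion id).card = ∑ u ∈ M, (id u).card :=
      Finset.card_biUnion (fun x hx y hy hxy =>
        hMdisj (Finset.mem_coe.mpr hx) (Finset.mem_coe.mpr hy) hxy)
    rw [hU, h1]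
    simp only [id_eq]
    rw [Finset.sum_congr rfl fun f hf => (hG f (hMprop f hf).1).2,
      Finset.sum_const, hMcard, smul_eq_mul]
  -- the edge E = {1, n-1, n} is in G
  set E : Finset ℕ := insert 1 (insert (n-1) ({n} : Finset ℕ)) with hEdef
  have hmemE : ∀ x, x ∈ E ↔ (x = 1 ∨ x = n-1 ∨ x = n) := by
    intro x; rw [hEdef]; simp [Finset.mem_insert]
  have hEcard : E.card = 3 := by
    rw [hEdef, Finset.card_insert_of_notMem, Finset.card_insert_of_notMem,
      Finset.card_singleton]
    · simp only [Finset.mem_singleton]; omega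
    · simp only [Finset.mem_insert, Finset.mem_singleton]; omega
  have hE : E ∈ G := by
    by_cases h1e : 1 ∈ e0
    · have hsub : E ⊆ e0 := by
        intro x hx
        rcases (hmemE x).mp hx with h | h | h <;> subst h <;> assumption
      have := Finset.eq_of_subset_of_card_le hsub
        (by rw [(hG e0 he0).2, hEcard])
      rw [this]; exact he0
    · have hns : ¬ e0 ⊆ insert (n-1) ({n} : Finset ℕ) := by
        intro h
        have h1 := Finset.card_le_card h
        have h2 := Finset.card_insert_le (n-1) ({n} : Finset ℕ)
        rw [(hG e0 he0).2] at h1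
        rw [Finset.card_singleton] at h2
        omega
      obtain ⟨a, hae, hanot⟩ := Finset.not_subset.mp hns
      rw [Finset.mem_insert, Finset.mem_singleton] at hanot
      push_neg at hanot
      have ha1 : a ≠ 1 := fun h => h1e (h ▸ hae)
      have hab := Finset.mem_Icc.mp ((hG e0 he0).1 hae)
      have key := hc 1 a le_rfl (by omega) hab.2 e0 he0 hae h1e
      have hEq : E = insert 1 (e0.erase a) := by
        apply Finset.eq_of_subset_of_card_le
        · intro x hx
          rcases (hmemE x).mp hx with h | h | h
          · subst h; exact Finset.mem_insert_self _ _
          · subst h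
            exact Finset.mem_insert_of_mem (Finset.mem_erase.mpr
              ⟨fun h => hanot.1 h.symm, hn1e0⟩)
          · subst h
            exact Finset.mem_insert_of_mem (Finset.mem_erase.mpr
              ⟨fun h => hanot.2 h.symm, hne0⟩)
        · have h3 := Finset.card_insert_le 1 (e0.erase a)
          rw [Finset.card_erase_of_mem hae, (hG e0 he0).2] at h3
          omega
      rw [hEq]; exact key
  -- choose fresh replacement vertices
  set S : Finset ℕ := (insert (n-1) ({n} : Finset ℕ)) ∩ U with hS
  set F : Finset ℕ := Finset.Icc 2 (n-2) \ U with hF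
  have hSF : S.card ≤ F.card := by
    have hF2 : Finset.Icc 2 (n-2) \ U
        = Finset.Icc 2 (n-2) \ (U \ insert (n-1) ({n} : Finset ℕ)) := by
      ext x
      simp only [Finset.mem_sdiff, Finset.mem_Icc]
      constructor
      · rintro ⟨h1, h2⟩
        exact ⟨h1, fun h => h2 h.1⟩
      · rintro ⟨h1, h2⟩
        refine ⟨h1, fun hxU => ?_⟩
        have hx : x ∈ insert (n-1) ({n} : Finset ℕ) := by
          by_contra hx; exact h2 ⟨hxU, hx⟩
        rw [Finset.mem_insert, Finset.mem_singleton] at hx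
        omega
    have hcards : (U ∩ insert (n-1) ({n} : Finset ℕ)).card
        + (U \ insert (n-1) ({n} : Finset ℕ)).card = U.card :=
      Finset.card_inter_add_card_sdiff U _
    have hScard : S.card = (U ∩ insert (n-1) ({n} : Finset ℕ)).card := by
      rw [hS, Finset.inter_comm]
    have hle := Finset.le_card_sdiff (U \ insert (n-1) ({n} : Finset ℕ))
      (Finset.Icc 2 (n-2))
    rw [← hF2, ← hF, Nat.card_Icc] at hle
    omega
  obtain ⟨φ, hφinj, hφmem⟩ := exists_inj_map S F hSF
  have hφfacts : ∀ x ∈ S, 2 ≤ φ x ∧ φ x ≤ n-2 ∧ ∀ g ∈ M, φ x ∉ g := by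
    intro x hx
    have := hφmem x hx
    rw [hF, Finset.mem_sdiff, Finset.mem_Icc] at this
    exact ⟨this.1.1, this.1.2, fun g hg hmem => this.2 (hUmem.mpr ⟨g, hg, hmem⟩)⟩
  have hnS : n ∈ U → n ∈ S := fun h => by
    rw [hS]; exact Finset.mem_inter.mpr ⟨by simp, h⟩
  have hn1S : n-1 ∈ U → n-1 ∈ S := fun h => by
    rw [hS]; exact Finset.mem_inter.mpr ⟨by simp, h⟩
  -- construct the new edge e'
  have key : ∃ e', e' ∈ G ∧ 1 ∈ e' ∧ ∀ x ∈ e', x = 1 ∨ ∀ g ∈ M, x ∉ g := by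
    have hnotU : ∀ x, x ∉ U → ∀ g ∈ M, x ∉ g :=
      fun x hx g hg hmem => hx (hUmem.mpr ⟨g, hg, hmem⟩)
    by_cases hnU : n ∈ U <;> by_cases hn1U : n-1 ∈ U
    · -- both n and n-1 are covered by M
      obtain ⟨hb1, hb2, hb3⟩ := hφfacts n (hnS hnU)
      obtain ⟨hc1, hc2, hc3⟩ := hφfacts (n-1) (hn1S hn1U)
      have hbc : φ n ≠ φ (n-1) := by
        intro h
        have := hφinj (Finset.mem_coe.mpr (hnS hnU))
          (Finset.mem_coe.mpr (hn1S hn1U)) h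
        omega
      have hbE : φ n ∉ E := by rw [hmemE]; push_neg; omega
      have he1 := hc (φ n) n (by omega) (by omega) le_rfl E hE
        ((hmemE n).mpr (by omega)) hbE
      set e1 : Finset ℕ := insert (φ n) (E.erase n) with he1def
      have hn1e1 : n-1 ∈ e1 := by
        rw [he1def]
        exact Finset.mem_insert_of_mem (Finset.mem_erase.mpr
          ⟨by omega, (hmemE (n-1)).mpr (by omega)⟩)
      have hce1 : φ (n-1) ∉ e1 := by
        rw [he1def, Finset.mem_insert]
        push_neg
        refine ⟨fun h => hbc h.symm, fun h => ?_⟩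
        have := (hmemE _).mp (Finset.mem_of_mem_erase h)
        omega
      have he2 := hc (φ (n-1)) (n-1) (by omega) (by omega) (by omega) e1 he1
        hn1e1 hce1
      refine ⟨_, he2, ?_, ?_⟩
      · apply Finset.mem_insert_of_mem
        apply Finset.mem_erase.mpr
        refine ⟨by omega, ?_⟩
        rw [he1def]
        exact Finset.mem_insert_of_mem (Finset.mem_erase.mpr
          ⟨by omega, (hmemE 1).mpr (by omega)⟩)
      · intro x hx
        rcases Finset.mem_insert.mp hx with h | h
        · right; subst h; exact hc3
        · have hx1 := Finset.mem_erase.mp h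
          rw [he1def] at hx1
          rcases Finset.mem_insert.mp hx1.2 with h' | h'
          · right; subst h'; exact hb3
          · have hx2 := Finset.mem_erase.mp h'
            have := (hmemE x).mp hx2.2
            left; omega
    · -- only n is covered
      obtain ⟨hb1, hb2, hb3⟩ := hφfacts n (hnS hnU)
      have hbE : φ n ∉ E := by rw [hmemE]; push_neg; omega
      have he1 := hc (φ n) n (by omega) (by omega) le_rfl E hE
        ((hmemE n).mpr (by omega)) hbE
      refine ⟨_, he1, ?_, ?_⟩
      · exact Finset.mem_insert_of_mem (Finset.mem_erase.mpr
          ⟨by omega, (hmemE 1).mpr (by omega)⟩)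
      · intro x hx
        rcases Finset.mem_insert.mp hx with h | h
        · right; subst h; exact hb3
        · have hx1 := Finset.mem_erase.mp h
          have := (hmemE x).mp hx1.2
          rcases this with h' | h' | h'
          · left; exact h'
          · right; subst h'; exact hnotU _ hn1U
          · omega
    · -- only n-1 is covered
      obtain ⟨hc1, hc2, hc3⟩ := hφfacts (n-1) (hn1S hn1U)
      have hcE : φ (n-1) ∉ E := by rw [hmemE]; push_neg; omega
      have he1 := hc (φ (n-1)) (n-1) (by omega) (by omega) (by omega) E hE
        ((hmemE (n-1)).mpr (by omega)) hcE
      refine ⟨_, he1, ?_, ?_⟩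
      · exact Finset.mem_insert_of_mem (Finset.mem_erase.mpr
          ⟨by omega, (hmemE 1).mpr (by omega)⟩)
      · intro x hx
        rcases Finset.mem_insert.mp hx with h | h
        · right; subst h; exact hc3
        · have hx1 := Finset.mem_erase.mp h
          have := (hmemE x).mp hx1.2
          rcases this with h' | h' | h'
          · left; exact h'
          · omega
          · right; subst h'; exact hnotU _ hnU
    · -- neither covered
      refine ⟨E, hE, (hmemE 1).mpr (by omega), ?_⟩
      intro x hx
      rcases (hmemE x).mp hx with h | h | h
      · left; exact h
      · right; subst h; exact hnotU _ hn1U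
      · right; subst h; exact hnotU _ hnU
  obtain ⟨e', he'G, he'1, he'free⟩ := key
  have he'M : e' ∉ M := fun h => (hMprop e' h).2 he'1
  have hdisjM : ∀ f ∈ M, Disjoint e' f := by
    intro f hf
    rw [Finset.disjoint_left]
    intro x hx hxf
    rcases he'free x hx with h | h
    · exact (hMprop f hf).2 (h ▸ hxf)
    · exact h f hf hxf
  refine ⟨insert e' M, ?_, ?_, ?_⟩
  · exact Finset.insert_subset he'G (fun f hf => (hMprop f hf).1)
  · rw [Finset.card_insert_of_notMem he'M, hMcard]; omega
  · rw [Finset.coe_insert]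
    exact (haveI : Std.Symm (fun e f : Finset ℕ => Disjoint e f) := ⟨fun a b h => h.symm⟩
      hMdisj.insert_of_symm (fun f hf _ => hdisjM f (Finset.mem_coe.mp hf)))


/-- Lagrangian polynomial: sum over edges of products of weights. -/
def lagPoly (G : Finset (Finset ℕ)) (x : ℕ → ℝ) : ℝ := ∑ e ∈ G, ∏ i ∈ e, x i

/-- A feasible weight vector on `[n] = {1,…,n}`. -/
def IsFeasible (n : ℕ) (x : ℕ → ℝ) : Prop :=
  (∀ i, 0 ≤ x i) ∧ ∑ i ∈ Finset.Icc 1 n, x i = 1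

/-- Lagrangian of a hypergraph on `[n]`. -/
noncomputable def lag (n : ℕ) (G : Finset (Finset ℕ)) : ℝ :=
  sSup {v : ℝ | ∃ x : ℕ → ℝ, IsFeasible n x ∧ lagPoly G x = v}

/-- `G` is an `r`-graph on the vertex set `{1,…,n}`. -/
def IsGraphOn (n r : ℕ) (G : Finset (Finset ℕ)) : Prop :=
  ∀ e ∈ G, e ⊆ Finset.Icc 1 n ∧ e.card = r

/-- The compression `π_{ij}(G)`: each edge `f ∪ {j}` with `f` avoiding `i,j` and
`f ∪ {i} ∉ G` is replaced by `f ∪ {i}`. -/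
def compress (G : Finset (Finset ℕ)) (i j : ℕ) : Finset (Finset ℕ) :=
  (G.filter fun e => ¬(j ∈ e ∧ i ∉ e ∧ insert i (e.erase j) ∉ G)) ∪
  ((G.filter fun e => j ∈ e ∧ i ∉ e ∧ insert i (e.erase j) ∉ G).image
    fun e => insert i (e.erase j))

/-- `G` contains `t` pairwise disjoint edges. -/
def HasMatching (G : Finset (Finset ℕ)) (t : ℕ) : Prop :=
  ∃ M : Finset (Finset ℕ), M ⊆ G ∧ M.card = t ∧
    (M : Set (Finset ℕ)).Pairwise fun e f => Disjoint e f

/-- `G` contains a complete `r`-graph on `p` vertices. -/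
def HasClique (G : Finset (Finset ℕ)) (p r : ℕ) : Prop :=
  ∃ S : Finset ℕ, S.card = p ∧ ∀ e ⊆ S, e.card = r → e ∈ G

/-- `G` is left-compressed relative to the natural order on `[n]`. -/
def LeftCompressed (n : ℕ) (G : Finset (Finset ℕ)) : Prop :=
  ∀ i j, 1 ≤ i → i < j → j ≤ n → ∀ e ∈ G, j ∈ e → i ∉ e → insert i (e.erase j) ∈ G

/-- The link of a vertex. -/
def link (G : Finset (Finset ℕ)) (v : ℕ) : Finset (Finset ℕ) :=
  (G.filter fun e => v ∈ e).image fun e => e.erase v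

theorem sub_structures (n r t : ℕ) (hr : 2 ≤ r) (ht : 2 ≤ t) (hn : t*r ≤ n)
    (G : Finset (Finset ℕ)) (hG : IsGraphOn n r G) (hM : ¬HasMatching G t)
    (hc : LeftCompressed n G) :
    ¬HasMatching (link G n) t ∧
    (r = 3 → (∃ e ∈ G, n-1 ∈ e ∧ n ∈ e) →
      ¬HasMatching (G.filter fun e => 1 ∉ e) (t-1)) := by
  constructor
  · rintro ⟨M, hMsub, hMcard, hMdisj⟩
    exact hM (part1 n r t hr ht hn G hG hc M hMsub hMcard hMdisj)
  · rintro hr3 ⟨e0, he0, hn1, hne⟩ ⟨M, hMsub, hMcard, hMdisj⟩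
    subst hr3
    exact hM (part2 n t ht hn G hG hc e0 he0 hn1 hne M hMsub hMcard hMdisj)
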